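/- Let K ≥ 1, α ∈ (0,1), and θ < 0. Let g_θ(u) = φ(Φ^{-1}(u) − θ)/φ(Φ^{-1}(u)) for u ∈ (0,1), and let A* = {u ∈ [0,1]^K : Σ_{i=1}^K Φ^{-1}(u_i)/√K < z_α}. Then the Lebesgue measure of A* equals α, and for every Lebesgue-measurable set A ⊆ [0,1]^K with Lebesgue measure at most α, ∫_A Π_{i=1}^K g_θ(u_i) du ≤ ∫_{A*} Π_{i=1}^K g_θ(u_i) du. That is, among all level-α rejection regions for the global null (all K p-values uniform), the region rejecting when Σ_i Φ^{-1}(u_i)/√K < z_α maximizes the probability of rejection when all K p-values are independent with density g_θ. -/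

import Mathlib

open MeasureTheory Finset

noncomputable section

/-- The unit cube `[0,1]^K`. -/
def unitCube (K : ℕ) : Set (Fin K → ℝ) := Set.Icc 0 1

/-- The standard normal density `φ`. -/
def stdNormalPDF (x : ℝ) : ℝ := (Real.sqrt (2 * Real.pi))⁻¹ * Real.exp (-(x ^ 2) / 2)

/-- The standard normal CDF `Φ`. -/
def stdNormalCDF (x : ℝ) : ℝ := ∫ t in Set.Iic x, stdNormalPDF t

/-- The standard normal quantile function `Φ⁻¹` (so `z_α = stdNormalQuantile α`). -/
def stdNormalQuantile : ℝ → ℝ := Function.invFun stdNormalCDF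

/-- `g_θ(u) = φ(Φ⁻¹(u) − θ)/φ(Φ⁻¹(u))`, the density on `(0,1)` of `Φ(X)` for
`X ~ N(θ, 1)`. -/
def gTheta (θ u : ℝ) : ℝ :=
  stdNormalPDF (stdNormalQuantile u - θ) / stdNormalPDF (stdNormalQuantile u)

/-- Joint density of the p-values in the independent Gaussian p-value model with
parameter `θ`, under configuration `h`: coordinates with `h k = 1` have density `g_θ`,
the others are uniform. -/
def gaussDensity (K : ℕ) (θ : ℝ) (h : Fin K → Bool) (u : Fin K → ℝ) : ℝ :=
  ∏ k, if h k then gTheta θ (u k) else 1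

/-- FDR of a decision rule `D` under configuration `h` in the independent Gaussian
p-value model with parameter `θ`. -/
def gaussFDR (K : ℕ) (θ : ℝ) (h : Fin K → Bool)
    (D : (Fin K → ℝ) → Fin K → ℝ) : ℝ :=
  ∫ u in unitCube K,
    ((∑ k, if h k then 0 else D u k) / max (∑ k, D u k) 1) * gaussDensity K θ h u

/-- Average power `Π_{θ,K}(D)` when all `K` nulls are false. -/
def gaussAvgPower (K : ℕ) (θ : ℝ) (D : (Fin K → ℝ) → Fin K → ℝ) : ℝ :=
  (1 / (K : ℝ)) *
    ∫ u in unitCube K, (∑ k, D u k) * gaussDensity K θ (fun _ => true) u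

open Classical in
/-- The rule `D̂` that rejects all `K` hypotheses iff `Σ_i Φ⁻¹(u_i)/√K < z_α`. -/
def globalRule (K : ℕ) (α : ℝ) (u : Fin K → ℝ) (_k : Fin K) : ℝ :=
  if (∑ i, stdNormalQuantile (u i)) / Real.sqrt K < stdNormalQuantile α then 1 else 0

/-- The region `A* = {u ∈ [0,1]^K : Σ_i Φ⁻¹(u_i)/√K < z_α}`. -/
def globalRejectRegion (K : ℕ) (α : ℝ) : Set (Fin K → ℝ) :=
  {u | u ∈ unitCube K ∧
    (∑ i, stdNormalQuantile (u i)) / Real.sqrt K < stdNormalQuantile α}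


open ProbabilityTheory Filter
open scoped NNReal ENNReal

section Aux

lemma stdNormalPDF_eq : stdNormalPDF = gaussianPDFReal 0 1 := by
  funext x
  simp only [stdNormalPDF, gaussianPDFReal]
  norm_num

lemma stdNormalPDF_pos (x : ℝ) : 0 < stdNormalPDF x := by
  rw [stdNormalPDF_eq]; exact gaussianPDFReal_pos 0 1 x one_ne_zero

lemma integrable_stdNormalPDF : Integrable stdNormalPDF := by
  rw [stdNormalPDF_eq]; exact integrable_gaussianPDFReal 0 1

lemma integral_stdNormalPDF : ∫ x, stdNormalPDF x = 1 := by
  rw [stdNormalPDF_eq]; exact integral_gaussianPDFReal_eq_one 0 one_ne_zero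

lemma gaussianReal_Iic (x : ℝ) :
    gaussianReal 0 1 (Set.Iic x) = ENNReal.ofReal (stdNormalCDF x) := by
  rw [gaussianReal_apply_eq_integral 0 one_ne_zero, stdNormalCDF, stdNormalPDF_eq]

lemma stdNormalPDF_continuous : Continuous stdNormalPDF := by
  unfold stdNormalPDF; fun_prop

lemma Φ_sub (a b : ℝ) (hab : a ≤ b) :
    stdNormalCDF b = stdNormalCDF a + ∫ t in Set.Ioc a b, stdNormalPDF t := by
  rw [stdNormalCDF, stdNormalCDF, ← Set.Iic_union_Ioc_eq_Iic hab,
    setIntegral_union (Set.Iic_disjoint_Ioc le_rfl) measurableSet_Ioc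
      integrable_stdNormalPDF.integrableOn integrable_stdNormalPDF.integrableOn]

lemma Φ_strictMono : StrictMono stdNormalCDF := by
  intro a b hab
  rw [Φ_sub a b hab.le]
  have : 0 < ∫ t in Set.Ioc a b, stdNormalPDF t := by
    rw [← intervalIntegral.integral_of_le hab.le]
    exact intervalIntegral.intervalIntegral_pos_of_pos
      integrable_stdNormalPDF.intervalIntegrable stdNormalPDF_pos hab
  linarith

lemma Φ_continuous : Continuous stdNormalCDF := by
  have h : stdNormalCDF = fun x => stdNormalCDF 0 + ∫ t in (0:ℝ)..x, stdNormalPDF t := by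
    funext x
    rcases le_total 0 x with h0 | h0
    · rw [intervalIntegral.integral_of_le h0, Φ_sub 0 x h0]
    · rw [intervalIntegral.integral_of_ge h0, Φ_sub x 0 h0]; ring
  rw [h]
  exact continuous_const.add (intervalIntegral.continuous_primitive
    (fun a b => integrable_stdNormalPDF.intervalIntegrable) 0)

lemma Φ_pos (x : ℝ) : 0 < stdNormalCDF x := by
  have h := Φ_strictMono (show x - 1 < x by linarith)
  have h2 : 0 ≤ stdNormalCDF (x - 1) :=
    setIntegral_nonneg measurableSet_Iic fun t _ => (stdNormalPDF_pos t).le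
  linarith

lemma Φ_lt_one (x : ℝ) : stdNormalCDF x < 1 := by
  have hc : stdNormalCDF x + ∫ t in Set.Ioi x, stdNormalPDF t = 1 := by
    rw [stdNormalCDF, ← integral_stdNormalPDF,
      ← integral_add_compl measurableSet_Iic integrable_stdNormalPDF]
    congr 1
    rw [Set.compl_Iic]
  have h2 : 0 < ∫ t in Set.Ioi x, stdNormalPDF t := by
    have hsub : (0:ℝ) < ∫ t in Set.Ioc x (x+1), stdNormalPDF t := by
      rw [← intervalIntegral.integral_of_le (by linarith)]
      exact intervalIntegral.intervalIntegral_pos_of_pos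
        integrable_stdNormalPDF.intervalIntegrable stdNormalPDF_pos (by linarith)
    have hmono : (∫ t in Set.Ioc x (x+1), stdNormalPDF t) ≤ ∫ t in Set.Ioi x, stdNormalPDF t :=
      setIntegral_mono_set integrable_stdNormalPDF.integrableOn
        (ae_of_all _ fun t => (stdNormalPDF_pos t).le)
        (HasSubset.Subset.eventuallyLE Set.Ioc_subset_Ioi_self)
    linarith
  linarith

lemma Φ_mem_Ioo (x : ℝ) : stdNormalCDF x ∈ Set.Ioo (0:ℝ) 1 := ⟨Φ_pos x, Φ_lt_one x⟩

lemma Φ_nat_tendsto : Tendsto (fun n : ℕ => stdNormalCDF n) atTop (nhds 1) := by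
  have := tendsto_setIntegral_of_monotone (f := stdNormalPDF) (μ := volume)
    (s := fun n : ℕ => Set.Iic (n:ℝ)) (fun n => measurableSet_Iic)
    (fun a b hab => Set.Iic_subset_Iic.2 (by exact_mod_cast hab))
    integrable_stdNormalPDF.integrableOn
  have hU : (⋃ n : ℕ, Set.Iic (n:ℝ)) = Set.univ := by
    ext x; simp only [Set.mem_iUnion, Set.mem_Iic, Set.mem_univ, iff_true]
    exact exists_nat_ge x
  rw [hU] at this
  simpa [stdNormalCDF, setIntegral_univ, integral_stdNormalPDF] using this

lemma exists_lt_Φ {y : ℝ} (hy : y < 1) : ∃ b, y < stdNormalCDF b := by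
  have := (Φ_nat_tendsto.eventually (eventually_gt_nhds hy)).exists
  obtain ⟨n, hn⟩ := this
  exact ⟨n, hn⟩

lemma Φ_neg_nat_tendsto : Tendsto (fun n : ℕ => stdNormalCDF (-n)) atTop (nhds 0) := by
  have hioi := tendsto_setIntegral_of_monotone (f := stdNormalPDF) (μ := volume)
    (s := fun n : ℕ => Set.Ioi (-(n:ℝ))) (fun n => measurableSet_Ioi)
    (fun a b hab => Set.Ioi_subset_Ioi (by simp; exact_mod_cast hab))
    integrable_stdNormalPDF.integrableOn
  have hU : (⋃ n : ℕ, Set.Ioi (-(n:ℝ))) = Set.univ := by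
    ext x; simp only [Set.mem_iUnion, Set.mem_Ioi, Set.mem_univ, iff_true]
    obtain ⟨n, hn⟩ := exists_nat_gt (-x)
    exact ⟨n, by linarith⟩
  rw [hU] at hioi
  rw [setIntegral_univ, integral_stdNormalPDF] at hioi
  have hid : ∀ n : ℕ, stdNormalCDF (-n) = 1 - ∫ t in Set.Ioi (-(n:ℝ)), stdNormalPDF t := by
    intro n
    have hc : stdNormalCDF (-(n:ℝ)) + ∫ t in Set.Ioi (-(n:ℝ)), stdNormalPDF t = 1 := by
      rw [stdNormalCDF, ← integral_stdNormalPDF,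
        ← integral_add_compl measurableSet_Iic integrable_stdNormalPDF]
      congr 1
      rw [Set.compl_Iic]
    linarith
  simp_rw [hid]
  have := hioi.const_sub 1
  simpa using this

lemma exists_Φ_lt {y : ℝ} (hy : 0 < y) : ∃ a, stdNormalCDF a < y := by
  obtain ⟨n, hn⟩ := (Φ_neg_nat_tendsto.eventually (eventually_lt_nhds hy)).exists
  exact ⟨-n, hn⟩

lemma Φ_surj {y : ℝ} (hy : y ∈ Set.Ioo (0:ℝ) 1) : ∃ x, stdNormalCDF x = y := by
  obtain ⟨a, ha⟩ := exists_Φ_lt hy.1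
  obtain ⟨b, hb⟩ := exists_lt_Φ hy.2
  have hab : a ≤ b := by
    by_contra h
    exact absurd (Φ_strictMono (not_le.1 h)) (by linarith)
  obtain ⟨x, _, hx⟩ := intermediate_value_Icc hab Φ_continuous.continuousOn
    (Set.mem_Icc.2 ⟨ha.le, hb.le⟩)
  exact ⟨x, hx⟩

lemma Φ_quantile {y : ℝ} (hy : y ∈ Set.Ioo (0:ℝ) 1) :
    stdNormalCDF (stdNormalQuantile y) = y :=
  Function.invFun_eq (Φ_surj hy)

lemma quantile_Φ (x : ℝ) : stdNormalQuantile (stdNormalCDF x) = x :=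
  Function.leftInverse_invFun Φ_strictMono.injective x

lemma quantile_const {y : ℝ} (hy : y ∉ Set.Ioo (0:ℝ) 1) :
    stdNormalQuantile y = stdNormalQuantile 2 := by
  have h1 : ¬∃ x, stdNormalCDF x = y := by
    rintro ⟨x, rfl⟩; exact hy (Φ_mem_Ioo x)
  have h2 : ¬∃ x, stdNormalCDF x = (2:ℝ) := by
    rintro ⟨x, hx⟩; have := Φ_lt_one x; linarith
  unfold stdNormalQuantile Function.invFun
  rw [dif_neg h1, dif_neg h2]

lemma quantile_lt_iff {y : ℝ} (hy : y ∈ Set.Ioo (0:ℝ) 1) (a : ℝ) :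
    stdNormalQuantile y < a ↔ y < stdNormalCDF a := by
  constructor
  · intro h
    calc y = stdNormalCDF (stdNormalQuantile y) := (Φ_quantile hy).symm
      _ < stdNormalCDF a := Φ_strictMono h
  · intro h
    by_contra hc
    have h2 := Φ_strictMono.monotone (not_lt.1 hc)
    rw [Φ_quantile hy] at h2
    linarith

lemma measurable_quantile : Measurable stdNormalQuantile := by
  apply measurable_of_Iio
  intro a
  have : stdNormalQuantile ⁻¹' Set.Iio a =
      (Set.Ioo (0:ℝ) 1 ∩ Set.Iio (stdNormalCDF a)) ∪
      ((Set.Ioo (0:ℝ) 1)ᶜ ∩ {y | stdNormalQuantile 2 < a}) := by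
    ext y
    by_cases hy : y ∈ Set.Ioo (0:ℝ) 1
    · simp only [Set.mem_preimage, Set.mem_Iio, Set.mem_union, Set.mem_inter_iff, hy,
        Set.mem_compl_iff, not_true, false_and, or_false, true_and]
      exact quantile_lt_iff hy a
    · simp only [Set.mem_preimage, Set.mem_Iio, Set.mem_union, Set.mem_inter_iff, hy,
        Set.mem_compl_iff, not_false_iff, true_and, false_and, false_or, Set.mem_setOf_eq]
      rw [quantile_const hy]
  rw [this]
  by_cases hc : stdNormalQuantile 2 < a
  · simp only [hc, Set.setOf_true, Set.inter_univ]
    exact (measurableSet_Ioo.inter measurableSet_Iio).union measurableSet_Ioo.compl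
  · simp only [hc, Set.setOf_false, Set.inter_empty, Set.union_empty]
    exact measurableSet_Ioo.inter measurableSet_Iio

lemma pdf_conv (v w : ℝ≥0) (hv : v ≠ 0) (hw : w ≠ 0) (z x : ℝ) :
    gaussianPDFReal 0 v x * gaussianPDFReal 0 w (z - x) =
    gaussianPDFReal 0 (v + w) z * gaussianPDFReal ((v:ℝ) * z / ((v:ℝ) + (w:ℝ)))
      (v * w / (v + w)) x := by
  have hv' : (0:ℝ) < v := lt_of_le_of_ne (v.coe_nonneg) (by exact_mod_cast (Ne.symm hv))
  have hw' : (0:ℝ) < w := lt_of_le_of_ne (w.coe_nonneg) (by exact_mod_cast (Ne.symm hw))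
  have hvw : (0:ℝ) < (v:ℝ) + w := by linarith
  have hu : ((v * w / (v + w) : ℝ≥0) : ℝ) = (v:ℝ) * w / ((v:ℝ) + w) := by
    push_cast; ring
  have hvw' : ((v + w : ℝ≥0) : ℝ) = (v:ℝ) + w := by push_cast; ring
  simp only [gaussianPDFReal, hu, hvw']
  have hπ : (0:ℝ) < 2 * Real.pi := by positivity
  rw [mul_mul_mul_comm, mul_mul_mul_comm _ (Real.exp _), ← Real.exp_add, ← Real.exp_add]
  congr 1
  · rw [← mul_inv, ← mul_inv, ← Real.sqrt_mul (by positivity), ← Real.sqrt_mul (by positivity)]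
    congr 2
    field_simp
  · congr 1
    field_simp
    ring

lemma gauss_prod_withDensity (v w : ℝ≥0) (hv : v ≠ 0) (hw : w ≠ 0) :
    (gaussianReal 0 v).prod (gaussianReal 0 w) =
      (volume.prod volume).withDensity (fun p => gaussianPDF 0 v p.1 * gaussianPDF 0 w p.2) := by
  have hfm : Measurable (fun p : ℝ × ℝ => gaussianPDF 0 v p.1 * gaussianPDF 0 w p.2) :=
    ((measurable_gaussianPDF 0 v).comp measurable_fst).mul
      ((measurable_gaussianPDF 0 w).comp measurable_snd)
  refine Measure.prod_eq (μ := gaussianReal 0 v) (ν := gaussianReal 0 w) fun s t hs ht => ?_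
  rw [withDensity_apply _ (hs.prod ht), ← Measure.prod_restrict, lintegral_prod_mul
    (measurable_gaussianPDF 0 v).aemeasurable (measurable_gaussianPDF 0 w).aemeasurable,
    gaussianReal_apply _ hv, gaussianReal_apply _ hw]

lemma gauss_conv (v w : ℝ≥0) :
    ((gaussianReal 0 v).prod (gaussianReal 0 w)).map (fun p => p.1 + p.2) =
      gaussianReal 0 (v + w) := by
  by_cases hv : v = 0
  · subst hv
    rw [gaussianReal_zero_var]
    rw [Measure.dirac_prod, Measure.map_map measurable_add measurable_prodMk_left]
    simp only [Function.comp_def, zero_add]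
    rw [Measure.map_id']
  by_cases hw : w = 0
  · subst hw
    rw [gaussianReal_zero_var]
    rw [Measure.prod_dirac, Measure.map_map measurable_add (measurable_id'.prodMk measurable_const)]
    simp only [Function.comp_def, add_zero]
    rw [Measure.map_id']
  -- main case
  have hu : v * w / (v + w) ≠ 0 := by
    rw [div_ne_zero_iff]  -- NNReal?
    exact ⟨mul_ne_zero hv hw, by simp [hv, hw]⟩
  have hmadd : Measurable (fun p : ℝ × ℝ => p.1 + p.2) := measurable_add
  have hmadd' : AEMeasurable (fun p : ℝ × ℝ => p.1 + p.2)
      ((gaussianReal 0 v).prod (gaussianReal 0 w)) := measurable_add.aemeasurable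
  haveI := Measure.isProbabilityMeasure_map hmadd'
  refine MeasureTheory.Measure.ext_of_Iic _ _ fun t => ?_
  rw [Measure.map_apply hmadd measurableSet_Iic, gauss_prod_withDensity v w hv hw]
  have hS : MeasurableSet ((fun p : ℝ × ℝ => p.1 + p.2) ⁻¹' Set.Iic t) := hmadd measurableSet_Iic
  have hfm : Measurable (fun p : ℝ × ℝ => gaussianPDF 0 v p.1 * gaussianPDF 0 w p.2) :=
    ((measurable_gaussianPDF 0 v).comp measurable_fst).mul
      ((measurable_gaussianPDF 0 w).comp measurable_snd)
  rw [withDensity_apply _ hS, ← lintegral_indicator hS]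
  set φ : ℝ × ℝ → ℝ≥0∞ := ((fun p : ℝ × ℝ => p.1 + p.2) ⁻¹' Set.Iic t).indicator
    (fun p => gaussianPDF 0 v p.1 * gaussianPDF 0 w p.2) with hφ
  have hφm : Measurable φ := hfm.indicator hS
  have hT : MeasurePreserving (fun z : ℝ × ℝ => (z.1, z.2 - z.1))
      ((volume : Measure ℝ).prod volume) (volume.prod volume) :=
    measurePreserving_prod_sub volume volume
  have key : ∫⁻ p, φ p ∂((volume : Measure ℝ).prod volume) =
      ∫⁻ p, φ (p.1, p.2 - p.1) ∂((volume : Measure ℝ).prod volume) :=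
    (hT.lintegral_comp hφm).symm
  rw [key]
  have hmu : Measurable (fun p : ℝ × ℝ =>
      gaussianPDF ((v:ℝ) * p.2 / ((v:ℝ) + (w:ℝ))) (v * w / (v + w)) p.1) := by
    apply Measurable.ennreal_ofReal
    unfold gaussianPDFReal
    fun_prop
  have hcomp : ∀ p : ℝ × ℝ, φ (p.1, p.2 - p.1) =
      (Set.Iic t).indicator (fun z => gaussianPDF 0 (v + w) z) p.2 *
        gaussianPDF ((v:ℝ) * p.2 / ((v:ℝ) + (w:ℝ))) (v * w / (v + w)) p.1 := by
    intro p
    rw [hφ]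
    by_cases hp : p.1 + (p.2 - p.1) ≤ t
    · have hp2 : p.2 ≤ t := by linarith
      rw [Set.indicator_of_mem (by simpa using hp), Set.indicator_of_mem (by simpa using hp2)]
      calc gaussianPDF 0 v p.1 * gaussianPDF 0 w (p.2 - p.1)
          = ENNReal.ofReal (gaussianPDFReal 0 v p.1 * gaussianPDFReal 0 w (p.2 - p.1)) :=
            (ENNReal.ofReal_mul (gaussianPDFReal_nonneg _ _ _)).symm
        _ = ENNReal.ofReal (gaussianPDFReal 0 (v + w) p.2 *
              gaussianPDFReal ((v:ℝ) * p.2 / ((v:ℝ) + (w:ℝ))) (v * w / (v + w)) p.1) := by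
            rw [pdf_conv v w hv hw p.2 p.1]
        _ = _ := ENNReal.ofReal_mul (gaussianPDFReal_nonneg _ _ _)
    · have hp2 : ¬ p.2 ≤ t := fun h => hp (by linarith)
      rw [Set.indicator_of_notMem (by simpa using hp),
        Set.indicator_of_notMem (by simpa using hp2), zero_mul]
  simp_rw [hcomp]
  have hg : Measurable (fun p : ℝ × ℝ => (Set.Iic t).indicator (fun z => gaussianPDF 0 (v + w) z) p.2 *
      gaussianPDF ((v:ℝ) * p.2 / ((v:ℝ) + (w:ℝ))) (v * w / (v + w)) p.1) := by
    apply Measurable.mul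
    · exact ((measurable_gaussianPDF 0 (v+w)).indicator measurableSet_Iic).comp measurable_snd
    · exact hmu
  rw [lintegral_prod_symm _ hg.aemeasurable]
  have hin : ∀ y : ℝ, (∫⁻ x, (Set.Iic t).indicator (fun z => gaussianPDF 0 (v + w) z) y *
      gaussianPDF ((v:ℝ) * y / ((v:ℝ) + (w:ℝ))) (v * w / (v + w)) x ∂volume) =
      (Set.Iic t).indicator (fun z => gaussianPDF 0 (v + w) z) y := by
    intro y
    rw [lintegral_const_mul _ (measurable_gaussianPDF _ _),
      lintegral_gaussianPDF_eq_one _ hu, mul_one]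
  simp_rw [hin]
  rw [lintegral_indicator measurableSet_Iic, ← gaussianReal_apply _ (by simp [hv]) ]

lemma pi_map_coord (K : ℕ) (g : ℝ → ℝ) (hg : Measurable g) (μ ν : Measure ℝ)
    [IsProbabilityMeasure μ] [IsProbabilityMeasure ν] (h : μ.map g = ν) :
    (Measure.pi fun _ : Fin K => μ).map (fun x i => g (x i)) =
      Measure.pi (fun _ : Fin K => ν) := by
  have hF : Measurable (fun x : Fin K → ℝ => fun i => g (x i)) :=
    measurable_pi_lambda _ fun i => hg.comp (measurable_pi_apply i)
  symm
  apply Measure.pi_eq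
  intro s hs
  rw [Measure.map_apply hF (MeasurableSet.univ_pi hs)]
  have hpre : (fun x : Fin K → ℝ => fun i => g (x i)) ⁻¹' (Set.pi Set.univ s) =
      Set.pi Set.univ (fun i => g ⁻¹' s i) := by
    ext x; simp [Set.mem_pi]
  rw [hpre, Measure.pi_pi]
  exact Finset.prod_congr rfl fun i _ => by rw [← h, Measure.map_apply hg (hs i)]

lemma map_sum_pi : ∀ n : ℕ,
    (Measure.pi fun _ : Fin n => gaussianReal 0 1).map (fun x => ∑ i, x i) =
      gaussianReal 0 (n : ℝ≥0)
  | 0 => by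
    rw [Measure.pi_of_empty]
    rw [Measure.map_dirac' (by fun_prop)]
    simp [gaussianReal_zero_var]
  | (n + 1) => by
    have hmp := measurePreserving_piFinSuccAbove (fun _ : Fin (n + 1) => gaussianReal 0 1) 0
    have he : (Measure.pi fun _ : Fin (n+1) => gaussianReal 0 1).map
        (MeasurableEquiv.piFinSuccAbove (fun _ : Fin (n+1) => ℝ) 0) =
        (gaussianReal 0 1).prod (Measure.pi fun _ : Fin n => gaussianReal 0 1) := hmp.map_eq
    have hS : Measurable (fun x : Fin (n+1) → ℝ => ∑ i, x i) := by fun_prop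
    have hcomp : (fun x : Fin (n+1) → ℝ => ∑ i, x i) =
        (fun p : ℝ × (Fin n → ℝ) => p.1 + ∑ i, p.2 i) ∘
          (MeasurableEquiv.piFinSuccAbove (fun _ : Fin (n+1) => ℝ) 0) := by
      funext x
      simp only [Function.comp_apply, MeasurableEquiv.piFinSuccAbove_apply]
      rw [Fin.sum_univ_succ]
      congr 1
    rw [hcomp, ← Measure.map_map (by fun_prop)
      (MeasurableEquiv.piFinSuccAbove (fun _ : Fin (n+1) => ℝ) 0).measurable, he]
    have hsplit : (fun p : ℝ × (Fin n → ℝ) => p.1 + ∑ i, p.2 i) =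
        (fun q : ℝ × ℝ => q.1 + q.2) ∘ (Prod.map id (fun y : Fin n → ℝ => ∑ i, y i)) := rfl
    rw [hsplit, ← Measure.map_map measurable_add (measurable_id.prodMap (by fun_prop)),
      ← Measure.map_prod_map _ _ measurable_id (by fun_prop), Measure.map_id,
      map_sum_pi n, gauss_conv]
    congr 1
    push_cast
    ring

lemma Φ_le_iff {y : ℝ} (hy : y ∈ Set.Ioo (0:ℝ) 1) (x : ℝ) :
    stdNormalCDF x ≤ y ↔ x ≤ stdNormalQuantile y := by
  constructor
  · intro h
    exact Φ_strictMono.le_iff_le.1 (le_of_le_of_eq h (Φ_quantile hy).symm)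
  · intro h
    calc stdNormalCDF x ≤ stdNormalCDF (stdNormalQuantile y) := Φ_strictMono.monotone h
      _ = y := Φ_quantile hy

lemma map_Φ : (gaussianReal 0 1).map stdNormalCDF = volume.restrict (Set.Ioo 0 1) := by
  have hΦm : Measurable stdNormalCDF := Φ_continuous.measurable
  haveI := Measure.isProbabilityMeasure_map (μ := gaussianReal 0 1) hΦm.aemeasurable
  refine MeasureTheory.Measure.ext_of_Iic _ _ fun a => ?_
  rw [Measure.map_apply hΦm measurableSet_Iic, Measure.restrict_apply measurableSet_Iic]
  rcases le_or_gt a 0 with h0 | h0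
  · have h1 : stdNormalCDF ⁻¹' Set.Iic a = ∅ := by
      ext x
      simp only [Set.mem_preimage, Set.mem_Iic, Set.mem_empty_iff_false, iff_false, not_le]
      exact lt_of_le_of_lt h0 (Φ_mem_Ioo x).1
    have h2 : Set.Iic a ∩ Set.Ioo 0 1 = ∅ := by
      ext x
      simp only [Set.mem_inter_iff, Set.mem_Iic, Set.mem_Ioo, Set.mem_empty_iff_false, iff_false,
        not_and, and_imp]
      intro hx h1' _; linarith
    rw [h1, h2]
    simp
  rcases lt_or_ge a 1 with h1 | h1
  · have ha : a ∈ Set.Ioo (0:ℝ) 1 := ⟨h0, h1⟩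
    have hpre : stdNormalCDF ⁻¹' Set.Iic a = Set.Iic (stdNormalQuantile a) := by
      ext x
      simp only [Set.mem_preimage, Set.mem_Iic]
      exact Φ_le_iff ha x
    have hint : Set.Iic a ∩ Set.Ioo 0 1 = Set.Ioc 0 a := by
      ext x
      simp only [Set.mem_inter_iff, Set.mem_Iic, Set.mem_Ioo, Set.mem_Ioc]
      constructor
      · rintro ⟨hxa, hx0, _⟩; exact ⟨hx0, hxa⟩
      · rintro ⟨hx0, hxa⟩; exact ⟨hxa, hx0, by linarith⟩
    rw [hpre, hint, gaussianReal_Iic, Φ_quantile ha, Real.volume_Ioc]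
    norm_num
  · have hpre : stdNormalCDF ⁻¹' Set.Iic a = Set.univ := by
      ext x
      simp only [Set.mem_preimage, Set.mem_Iic, Set.mem_univ, iff_true]
      exact le_trans (Φ_mem_Ioo x).2.le h1
    have hint : Set.Iic a ∩ Set.Ioo 0 1 = Set.Ioo 0 1 := by
      ext x
      simp only [Set.mem_inter_iff, Set.mem_Iic, Set.mem_Ioo]
      exact ⟨fun h => h.2, fun h => ⟨by linarith [h.2], h⟩⟩
    rw [hpre, hint, Real.volume_Ioo]
    simp

lemma pi_restrict_Ioo (K : ℕ) :
    Measure.pi (fun _ : Fin K => (volume : Measure ℝ).restrict (Set.Ioo 0 1)) =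
      (volume : Measure (Fin K → ℝ)).restrict (Set.pi Set.univ fun _ => Set.Ioo 0 1) := by
  apply Measure.pi_eq
  intro s hs
  rw [Measure.restrict_apply (MeasurableSet.univ_pi hs), ← Set.pi_inter_distrib]
  rw [volume_pi_pi]
  exact Finset.prod_congr rfl fun i _ => by
    rw [Measure.restrict_apply (hs i)]

lemma cube_ae_box (K : ℕ) :
    (Set.pi Set.univ fun _ : Fin K => Set.Ioo (0:ℝ) 1) =ᵐ[volume] (Set.Icc (0 : Fin K → ℝ) 1) := by
  apply ae_eq_of_subset_of_measure_ge
  · rw [← Set.pi_univ_Icc]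
    exact Set.pi_mono fun i _ => Set.Ioo_subset_Icc_self
  · rw [← Set.pi_univ_Icc, volume_pi_pi, volume_pi_pi]
    simp
  · exact (MeasurableSet.univ_pi fun _ => measurableSet_Ioo).nullMeasurableSet
  · rw [← Set.pi_univ_Icc, volume_pi_pi]
    simp

-- abstract Neyman-Pearson core
lemma np_core {X : Type*} [MeasurableSpace X] {μ : Measure X} {f : X → ℝ} {A B : Set X} {c : ℝ}
    (hA : MeasurableSet A) (hB : MeasurableSet B) (hμA : μ A ≠ ⊤) (hμB : μ B ≠ ⊤)
    (hfA : IntegrableOn f A μ) (hfB : IntegrableOn f B μ) (hc : 0 ≤ c)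
    (hle : ∀ x ∈ A \ B, f x ≤ c) (hge : ∀ x ∈ B \ A, c ≤ f x) (hmeas : μ A ≤ μ B) :
    ∫ x in A, f x ∂μ ≤ ∫ x in B, f x ∂μ := by
  have hdAB : Disjoint (A ∩ B) (A \ B) :=
    Disjoint.mono_left Set.inter_subset_right disjoint_sdiff_self_right
  have hdBA : Disjoint (B ∩ A) (B \ A) :=
    Disjoint.mono_left Set.inter_subset_right disjoint_sdiff_self_right
  have hsplitA : ∫ x in A, f x ∂μ = (∫ x in A ∩ B, f x ∂μ) + ∫ x in A \ B, f x ∂μ := by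
    rw [← setIntegral_union hdAB (hA.diff hB) (hfA.mono_set Set.inter_subset_left)
      (hfA.mono_set Set.diff_subset), Set.inter_union_diff]
  have hsplitB : ∫ x in B, f x ∂μ = (∫ x in B ∩ A, f x ∂μ) + ∫ x in B \ A, f x ∂μ := by
    rw [← setIntegral_union hdBA (hB.diff hA) (hfB.mono_set Set.inter_subset_left)
      (hfB.mono_set Set.diff_subset), Set.inter_union_diff]
  rw [hsplitA, hsplitB, Set.inter_comm B A]
  apply add_le_add le_rfl
  -- ∫_{A\B} f ≤ ∫_{B\A} f
  have hμd : μ (A \ B) ≤ μ (B \ A) := by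
    have h1 : μ (A \ B) + μ (A ∩ B) = μ A := measure_diff_add_inter A hB
    have h2 : μ (B \ A) + μ (B ∩ A) = μ B := measure_diff_add_inter B hA
    rw [Set.inter_comm B A] at h2
    have hfin : μ (A ∩ B) ≠ ⊤ := (lt_of_le_of_lt (measure_mono Set.inter_subset_left)
      (lt_top_iff_ne_top.2 hμA)).ne
    have := h1.trans_le (hmeas.trans h2.symm.le)
    exact (ENNReal.add_le_add_iff_right hfin).1 this
  have hfinAB : μ (A \ B) ≠ ⊤ := (lt_of_le_of_lt (measure_mono Set.diff_subset)
    (lt_top_iff_ne_top.2 hμA)).ne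
  have hfinBA : μ (B \ A) ≠ ⊤ := (lt_of_le_of_lt (measure_mono Set.diff_subset)
    (lt_top_iff_ne_top.2 hμB)).ne
  calc ∫ x in A \ B, f x ∂μ ≤ ∫ _x in A \ B, c ∂μ := by
        apply setIntegral_mono_on (hfA.mono_set Set.diff_subset) ?_ (hA.diff hB) hle
        exact integrableOn_const hfinAB
    _ = (μ (A \ B)).toReal * c := by rw [setIntegral_const, smul_eq_mul, Measure.real_def]
    _ ≤ (μ (B \ A)).toReal * c := by
        apply mul_le_mul_of_nonneg_right ?_ hc
        exact ENNReal.toReal_le_toReal hfinAB hfinBA |>.2 hμd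
    _ = ∫ _x in B \ A, c ∂μ := by rw [setIntegral_const, smul_eq_mul, Measure.real_def]
    _ ≤ ∫ x in B \ A, f x ∂μ := by
        apply setIntegral_mono_on ?_ (hfB.mono_set Set.diff_subset) (hB.diff hA) hge
        exact integrableOn_const hfinBA


lemma gTheta_eq (θ u : ℝ) : gTheta θ u = Real.exp (θ * stdNormalQuantile u - θ^2/2) := by
  unfold gTheta stdNormalPDF
  rw [mul_div_mul_left _ _ (by positivity : (Real.sqrt (2*Real.pi))⁻¹ ≠ 0), ← Real.exp_sub]
  congr 1
  ring

lemma prod_gTheta (K : ℕ) (θ : ℝ) (u : Fin K → ℝ) :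
    ∏ i, gTheta θ (u i) =
      Real.exp (θ * ∑ i, stdNormalQuantile (u i) - K * (θ^2/2)) := by
  simp_rw [gTheta_eq]
  rw [← Real.exp_sum]
  congr 1
  rw [Finset.sum_sub_distrib, ← Finset.mul_sum, Finset.sum_const, Finset.card_univ,
    Fintype.card_fin, nsmul_eq_mul]

lemma measurable_sumQ (K : ℕ) :
    Measurable (fun u : Fin K → ℝ => ∑ i, stdNormalQuantile (u i)) :=
  Finset.measurable_sum _ fun i _ => measurable_quantile.comp (measurable_pi_apply i)

lemma measurable_F (K : ℕ) :
    Measurable (fun x : Fin K → ℝ => fun i => stdNormalCDF (x i)) :=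
  measurable_pi_lambda _ fun i => Φ_continuous.measurable.comp (measurable_pi_apply i)

lemma restrict_cube (K : ℕ) :
    (volume : Measure (Fin K → ℝ)).restrict (Set.Icc 0 1) =
      (Measure.pi fun _ : Fin K => gaussianReal 0 1).map (fun x i => stdNormalCDF (x i)) := by
  haveI : IsProbabilityMeasure ((volume : Measure ℝ).restrict (Set.Ioo 0 1)) := by
    constructor
    rw [Measure.restrict_apply_univ, Real.volume_Ioo]
    norm_num
  rw [pi_map_coord K _ Φ_continuous.measurable _ _ map_Φ, pi_restrict_Ioo,
    Measure.restrict_congr_set (cube_ae_box K)]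

lemma volume_region (K : ℕ) (hK : 1 ≤ K) {α : ℝ} (hα : α ∈ Set.Ioo (0:ℝ) 1) :
    volume (globalRejectRegion K α) = ENNReal.ofReal α := by
  have hKR : (0:ℝ) < (K:ℝ) := by exact_mod_cast hK
  have hK0 : (0:ℝ) < Real.sqrt K := Real.sqrt_pos.2 hKR
  set z := stdNormalQuantile α with hzdef
  have hsetm : MeasurableSet {u : Fin K → ℝ | ∑ i, stdNormalQuantile (u i) < z * Real.sqrt K} :=
    measurableSet_lt (measurable_sumQ K) measurable_const
  have hregion : globalRejectRegion K α =
      {u | ∑ i, stdNormalQuantile (u i) < z * Real.sqrt K} ∩ Set.Icc 0 1 := by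
    ext u
    simp only [globalRejectRegion, unitCube, Set.mem_setOf_eq, Set.mem_inter_iff]
    constructor
    · rintro ⟨h1, h2⟩
      exact ⟨(div_lt_iff₀ hK0).1 h2, h1⟩
    · rintro ⟨h2, h1⟩
      exact ⟨h1, (div_lt_iff₀ hK0).2 h2⟩
  rw [hregion, ← Measure.restrict_apply hsetm, restrict_cube K,
    Measure.map_apply (measurable_F K) hsetm]
  have hpre : (fun x : Fin K → ℝ => fun i => stdNormalCDF (x i)) ⁻¹'
      {u | ∑ i, stdNormalQuantile (u i) < z * Real.sqrt K} =
      (fun x : Fin K → ℝ => ∑ i, x i) ⁻¹' (Set.Iio (z * Real.sqrt K)) := by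
    ext x
    simp [quantile_Φ]
  rw [hpre, ← Measure.map_apply (by fun_prop) measurableSet_Iio, map_sum_pi K]
  have hnn : (NNReal.mk ((Real.sqrt K)^2) (sq_nonneg _) * 1 : ℝ≥0) = (K : ℝ≥0) := by
    rw [mul_one]
    ext
    simp only [NNReal.coe_mk, NNReal.coe_natCast]
    exact Real.sq_sqrt hKR.le
  have hmap : gaussianReal 0 (K:ℝ≥0) = (gaussianReal 0 1).map (Real.sqrt K * ·) := by
    rw [gaussianReal_map_const_mul, hnn, mul_zero]
  rw [hmap, Measure.map_apply (measurable_id'.const_mul _) measurableSet_Iio]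
  have hpre2 : (Real.sqrt K * ·) ⁻¹' (Set.Iio (z * Real.sqrt K)) = Set.Iio z := by
    ext x
    simp only [Set.mem_preimage, Set.mem_Iio]
    rw [mul_comm z, mul_lt_mul_iff_right₀ hK0]
  rw [hpre2]
  have hzs : gaussianReal 0 1 {z} = 0 := by
    rw [gaussianReal_apply _ one_ne_zero, lintegral_singleton]
    simp
  rw [measure_congr (Iio_ae_eq_Iic' hzs), gaussianReal_Iic, Φ_quantile hα]

lemma integrable_exp_gauss (K : ℕ) (hK : 1 ≤ K) (θ : ℝ) :
    Integrable (fun y : ℝ => Real.exp (θ * y)) (gaussianReal 0 (K:ℝ≥0)) := by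
  have hKR : (0:ℝ) < (K:ℝ) := by exact_mod_cast hK
  have hKnn : (K : ℝ≥0) ≠ 0 := by
    simp only [ne_eq, Nat.cast_eq_zero]
    omega
  rw [gaussianReal_of_var_ne_zero 0 hKnn]
  rw [integrable_withDensity_iff (measurable_gaussianPDF 0 _)
    (ae_of_all _ fun x => ENNReal.ofReal_lt_top)]
  have heq : (fun x => Real.exp (θ * x) * (gaussianPDF 0 (K:ℝ≥0) x).toReal) =
      fun x => Real.exp ((K:ℝ) * θ^2/2) * gaussianPDFReal (θ * K) (K:ℝ≥0) x := by
    funext x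
    rw [gaussianPDF, ENNReal.toReal_ofReal (gaussianPDFReal_nonneg _ _ _)]
    unfold gaussianPDFReal
    rw [mul_left_comm, mul_left_comm (Real.exp ((K:ℝ) * θ^2/2))]
    congr 1
    rw [← Real.exp_add, ← Real.exp_add]
    congr 1
    have hco : ((K:ℝ≥0):ℝ) = (K:ℝ) := by norm_cast
    rw [hco]
    field_simp
    ring
  rw [heq]
  exact (integrable_gaussianPDFReal _ _).const_mul _

lemma integrable_prod_gTheta (K : ℕ) (hK : 1 ≤ K) (θ : ℝ) :
    IntegrableOn (fun u : Fin K → ℝ => ∏ i, gTheta θ (u i)) (Set.Icc 0 1) volume := by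
  have hfm : Measurable (fun u : Fin K → ℝ => ∏ i, gTheta θ (u i)) := by
    simp_rw [prod_gTheta]
    exact Real.measurable_exp.comp (((measurable_sumQ K).const_mul θ).sub measurable_const)
  rw [IntegrableOn, restrict_cube K,
    integrable_map_measure hfm.aestronglyMeasurable (measurable_F K).aemeasurable]
  have hcomp : ((fun u : Fin K → ℝ => ∏ i, gTheta θ (u i)) ∘
      (fun x : Fin K → ℝ => fun i => stdNormalCDF (x i))) =
      fun x => Real.exp (θ * ∑ i, x i) * Real.exp (-((K:ℝ) * (θ^2/2))) := by
    funext x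
    simp only [Function.comp_apply]
    rw [prod_gTheta, ← Real.exp_add]
    congr 1
    simp_rw [quantile_Φ]
    ring
  rw [hcomp]
  apply Integrable.mul_const
  have hsum : Measurable (fun x : Fin K → ℝ => ∑ i, x i) := by fun_prop
  have h1 : Integrable (fun y : ℝ => Real.exp (θ * y))
      ((Measure.pi fun _ : Fin K => gaussianReal 0 1).map (fun x => ∑ i, x i)) := by
    rw [map_sum_pi K]
    exact integrable_exp_gauss K hK θ
  have h2 := (integrable_map_measure
    (Real.measurable_exp.comp (measurable_id'.const_mul θ)).aestronglyMeasurable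
    hsum.aemeasurable).1 h1
  simpa [Function.comp_def] using h2


end Aux

/-- The region `A*` rejecting when `Σ_i Φ⁻¹(u_i)/√K < z_α` has
Lebesgue measure `α` in `[0,1]^K`, and among all measurable `A ⊆ [0,1]^K` of measure at
most `α` it maximizes `∫_A Π_i g_θ(u_i) du`, i.e. the rejection probability when all `K`
p-values are independent with density `g_θ`. -/
theorem globalRejectRegion_measure_and_NP_optimality
    (K : ℕ) (hK : 1 ≤ K) (α θ : ℝ) (hα : α ∈ Set.Ioo (0 : ℝ) 1) (hθ : θ < 0) :
    volume (globalRejectRegion K α) = ENNReal.ofReal α ∧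
    ∀ A : Set (Fin K → ℝ), MeasurableSet A → A ⊆ unitCube K →
      volume A ≤ ENNReal.ofReal α →
      (∫ u in A, ∏ i, gTheta θ (u i)) ≤
        ∫ u in globalRejectRegion K α, ∏ i, gTheta θ (u i) := by
  have hKR : (0:ℝ) < (K:ℝ) := by exact_mod_cast hK
  have hK0 : (0:ℝ) < Real.sqrt K := Real.sqrt_pos.2 hKR
  set z := stdNormalQuantile α with hzdef
  have hsetm : MeasurableSet {u : Fin K → ℝ | ∑ i, stdNormalQuantile (u i) < z * Real.sqrt K} :=
    measurableSet_lt (measurable_sumQ K) measurable_const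
  have hBmem : ∀ u : Fin K → ℝ, u ∈ globalRejectRegion K α ↔
      u ∈ unitCube K ∧ ∑ i, stdNormalQuantile (u i) < z * Real.sqrt K := by
    intro u
    constructor
    · rintro ⟨h1, h2⟩
      exact ⟨h1, (div_lt_iff₀ hK0).1 h2⟩
    · rintro ⟨h1, h2⟩
      exact ⟨h1, (div_lt_iff₀ hK0).2 h2⟩
  have hBeq : globalRejectRegion K α =
      Set.Icc 0 1 ∩ {u | ∑ i, stdNormalQuantile (u i) < z * Real.sqrt K} := by
    ext u
    rw [hBmem u]
    rfl
  have hBmeas : MeasurableSet (globalRejectRegion K α) := by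
    rw [hBeq]
    exact measurableSet_Icc.inter hsetm
  have hBvol : volume (globalRejectRegion K α) = ENNReal.ofReal α := volume_region K hK hα
  refine ⟨hBvol, fun A hAmeas hAsub hAvol => ?_⟩
  have hBsub : globalRejectRegion K α ⊆ unitCube K := fun u hu => hu.1
  set c : ℝ := Real.exp (θ * (z * Real.sqrt K) - K * (θ^2/2)) with hcdef
  apply np_core (c := c) hAmeas hBmeas
  · exact (hAvol.trans_lt ENNReal.ofReal_lt_top).ne
  · rw [hBvol]
    exact ENNReal.ofReal_ne_top
  · exact (integrable_prod_gTheta K hK θ).mono_set hAsub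
  · exact (integrable_prod_gTheta K hK θ).mono_set hBsub
  · exact (Real.exp_pos _).le
  · rintro u ⟨huA, huB⟩
    have hucube : u ∈ unitCube K := hAsub huA
    have hsum : z * Real.sqrt K ≤ ∑ i, stdNormalQuantile (u i) := by
      by_contra hlt
      exact huB ((hBmem u).2 ⟨hucube, not_le.1 hlt⟩)
    rw [prod_gTheta, hcdef]
    apply Real.exp_le_exp.2
    have : θ * ∑ i, stdNormalQuantile (u i) ≤ θ * (z * Real.sqrt K) :=
      mul_le_mul_of_nonpos_left hsum hθ.le
    linarith
  · rintro u ⟨huB, _⟩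
    have hsum : ∑ i, stdNormalQuantile (u i) < z * Real.sqrt K := ((hBmem u).1 huB).2
    rw [prod_gTheta, hcdef]
    apply Real.exp_le_exp.2
    have : θ * (z * Real.sqrt K) ≤ θ * ∑ i, stdNormalQuantile (u i) :=
      mul_le_mul_of_nonpos_left hsum.le hθ.le
    linarith
  · rw [hBvol]
    exact hAvol

end
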